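/- With m₁ = √(3/5), one has f(m₁) = −(14/25)K(m₁) + (23/25)E(m₁) > 0. -/

import Mathlib

open Real Set Filter

noncomputable def Kc (q : ℝ) : ℝ := ∫ θ in (0:ℝ)..(π/2), 1 / Real.sqrt (1 - q^2 * Real.sin θ^2)

noncomputable def Ec (q : ℝ) : ℝ := ∫ θ in (0:ℝ)..(π/2), Real.sqrt (1 - q^2 * Real.sin θ^2)

noncomputable def fc (q : ℝ) : ℝ := (4*q^4 - 5*q^2 + 1) * Kc q + (-8*q^4 + 8*q^2 - 1) * Ec q

lemma w_lb (θ : ℝ) : (2/5 : ℝ) ≤ 1 - (3/5 : ℝ) * Real.sin θ ^ 2 := by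
  have h1 := Real.sin_sq_le_one θ
  nlinarith

lemma w_ub (θ : ℝ) : 1 - (3/5 : ℝ) * Real.sin θ ^ 2 ≤ 1 := by
  have h2 := sq_nonneg (Real.sin θ)
  nlinarith

-- pointwise chord bound: 23√w - 14/√w ≥ 9 - (9 + 12√(2/5)) sin²θ
lemma pointwise (θ : ℝ) :
    9 - (9 + 12 * Real.sqrt (2/5)) * Real.sin θ ^ 2 ≤
      23 * Real.sqrt (1 - (3/5) * Real.sin θ ^ 2) -
        14 * (1 / Real.sqrt (1 - (3/5) * Real.sin θ ^ 2)) := by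
  have hw1 := w_lb θ
  have hw2 := w_ub θ
  set a : ℝ := Real.sqrt (2/5) with ha
  set u : ℝ := Real.sqrt (1 - (3/5) * Real.sin θ ^ 2) with hu
  have ha2 : a ^ 2 = 2/5 := Real.sq_sqrt (by norm_num)
  have hapos : 0 < a := Real.sqrt_pos.mpr (by norm_num)
  have hu2 : u ^ 2 = 1 - (3/5) * Real.sin θ ^ 2 :=
    Real.sq_sqrt (le_trans (by norm_num) hw1)
  have hua : a ≤ u := Real.sqrt_le_sqrt hw1
  have hu1 : u ≤ 1 := by
    calc u ≤ Real.sqrt 1 := Real.sqrt_le_sqrt hw2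
      _ = 1 := Real.sqrt_one
  have hupos : 0 < u := lt_of_lt_of_le hapos hua
  have hs : Real.sin θ ^ 2 = (5/3) * (1 - u ^ 2) := by rw [hu2]; ring
  rw [hs]
  have expand : (23*u^2 - 14 - 9*u + (15+20*a)*(u - u^3)) * a
      = (u-a)*(1-u)*((15+20*a)*u*a + 14) := by
    linear_combination (-(u^2-u)*(35+20*a)) * ha2
  have key : 0 ≤ (u-a)*(1-u)*((15+20*a)*u*a + 14) := by
    have h1 : 0 ≤ u - a := by linarith
    have h2 : 0 ≤ 1 - u := by linarith
    have h3 : 0 ≤ (15+20*a)*u*a + 14 := by positivity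
    positivity
  have inner_nonneg : 0 ≤ 23*u^2 - 14 - 9*u + (15+20*a)*(u - u^3) := by
    nlinarith [expand, key, hapos]
  rw [← sub_nonneg]
  have hmul : (23*u - 14*(1/u) - (9 - (9+12*a)*((5/3)*(1-u^2)))) * u
      = 23*u^2 - 14 - 9*u + (15+20*a)*(u - u^3) := by
    field_simp
    ring
  nlinarith [hmul, inner_nonneg, hupos]

lemma cont_w : Continuous (fun θ : ℝ => 1 - (3/5 : ℝ) * Real.sin θ ^ 2) := by
  continuity

lemma cont_sqrtw : Continuous (fun θ : ℝ => Real.sqrt (1 - (3/5 : ℝ) * Real.sin θ ^ 2)) :=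
  Real.continuous_sqrt.comp cont_w

lemma cont_inv : Continuous (fun θ : ℝ => 1 / Real.sqrt (1 - (3/5 : ℝ) * Real.sin θ ^ 2)) := by
  apply Continuous.div continuous_const cont_sqrtw
  intro x
  exact ne_of_gt (Real.sqrt_pos.mpr (lt_of_lt_of_le (by norm_num) (w_lb x)))

set_option maxHeartbeats 1000000 in
theorem stmt_9 :
    fc (Real.sqrt (3/5)) =
      -(14/25) * Kc (Real.sqrt (3/5)) + (23/25) * Ec (Real.sqrt (3/5)) ∧
    0 < fc (Real.sqrt (3/5)) := by
  set q : ℝ := Real.sqrt (3/5) with hq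
  have hq2 : q ^ 2 = 3/5 := Real.sq_sqrt (by norm_num)
  have hq4 : q ^ 4 = 9/25 := by
    have : q ^ 4 = (q ^ 2) ^ 2 := by ring
    rw [this, hq2]; norm_num
  have heq : fc q = -(14/25) * Kc q + (23/25) * Ec q := by
    show (4*q^4 - 5*q^2 + 1) * Kc q + (-8*q^4 + 8*q^2 - 1) * Ec q
        = -(14/25) * Kc q + (23/25) * Ec q
    rw [hq4, hq2]; ring
  refine ⟨heq, ?_⟩
  rw [heq]
  -- rewrite Kc q and Ec q with q^2 = 3/5
  have hK : Kc q = ∫ θ in (0:ℝ)..(π/2), 1 / Real.sqrt (1 - (3/5) * Real.sin θ^2) := by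
    rw [Kc, hq2]
  have hE : Ec q = ∫ θ in (0:ℝ)..(π/2), Real.sqrt (1 - (3/5) * Real.sin θ^2) := by
    rw [Ec, hq2]
  set a : ℝ := Real.sqrt (2/5) with ha
  have ha2 : a ^ 2 = 2/5 := Real.sq_sqrt (by norm_num)
  have hapos : 0 < a := Real.sqrt_pos.mpr (by norm_num)
  have hint1 : IntervalIntegrable (fun θ : ℝ => 23 * Real.sqrt (1 - (3/5) * Real.sin θ^2)
      - 14 * (1 / Real.sqrt (1 - (3/5) * Real.sin θ^2))) MeasureTheory.volume 0 (π/2) :=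
    ((continuous_const.mul cont_sqrtw).sub (continuous_const.mul cont_inv)).intervalIntegrable _ _
  have hint2 : IntervalIntegrable (fun θ : ℝ => 9 - (9 + 12*a) * Real.sin θ ^ 2)
      MeasureTheory.volume 0 (π/2) := by
    apply Continuous.intervalIntegrable
    continuity
  have hcomb : 23 * Ec q - 14 * Kc q
      = ∫ θ in (0:ℝ)..(π/2), (23 * Real.sqrt (1 - (3/5) * Real.sin θ^2)
          - 14 * (1 / Real.sqrt (1 - (3/5) * Real.sin θ^2))) := by
    rw [hK, hE, ← intervalIntegral.integral_const_mul, ← intervalIntegral.integral_const_mul,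
      ← intervalIntegral.integral_sub
        (show IntervalIntegrable (fun θ : ℝ => 23 * Real.sqrt (1 - (3/5) * Real.sin θ^2))
          MeasureTheory.volume 0 (π/2) from (continuous_const.mul cont_sqrtw).intervalIntegrable _ _)
        (show IntervalIntegrable (fun θ : ℝ => 14 * (1 / Real.sqrt (1 - (3/5) * Real.sin θ^2)))
          MeasureTheory.volume 0 (π/2) from (continuous_const.mul cont_inv).intervalIntegrable _ _)]
  have hsin2 : (∫ θ in (0:ℝ)..(π/2), Real.sin θ ^ 2) = π/4 := by
    rw [integral_sin_sq]
    simp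
    ring
  have hlow : (∫ θ in (0:ℝ)..(π/2), (9 - (9 + 12*a) * Real.sin θ ^ 2))
      = 9 * (π/2) - (9 + 12*a) * (π/4) := by
    rw [intervalIntegral.integral_sub (by apply Continuous.intervalIntegrable; continuity)
        (by apply Continuous.intervalIntegrable; continuity),
      intervalIntegral.integral_const_mul, hsin2]
    simp [intervalIntegral.integral_const]
    ring
  have hmono : (∫ θ in (0:ℝ)..(π/2), (9 - (9 + 12*a) * Real.sin θ ^ 2))
      ≤ ∫ θ in (0:ℝ)..(π/2), (23 * Real.sqrt (1 - (3/5) * Real.sin θ^2)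
          - 14 * (1 / Real.sqrt (1 - (3/5) * Real.sin θ^2))) := by
    apply intervalIntegral.integral_mono_on (by linarith [Real.pi_pos]) hint2 hint1
    intro x _
    exact pointwise x
  have hpos : 0 < 9 * (π/2) - (9 + 12*a) * (π/4) := by
    have hπ : 0 < π := Real.pi_pos
    have ha34 : a < 3/4 := by nlinarith [ha2, hapos]
    nlinarith
  have h1 : 0 < 23 * Ec q - 14 * Kc q := by
    rw [hcomb]; calc (0:ℝ) < 9 * (π/2) - (9 + 12*a) * (π/4) := hpos
      _ = ∫ θ in (0:ℝ)..(π/2), (9 - (9 + 12*a) * Real.sin θ ^ 2) := hlow.symm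
      _ ≤ _ := hmono
  linarith
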